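/- Robustness characterizes Boolean finite-trace satisfaction for the propositional-modal fragment: for LTL formulas built from atoms of the form f(L(s)) < c using ∧, ∨, □, ◇, if ρ(t, ψ) > 0 then t satisfies ψ under the Boolean finite semantics (where the atom f(L(s)) < c holds iff f(L(s)) < c), and if ρ(t, ψ) < 0 then t does not satisfy ψ. -/
import Mathlib


/-- The negation-free propositional-modal fragment of LTL, with real-valued
atoms `f(state) < c` and the connectives ∧, ∨, □, ◇. -/
inductive PForm (σ : Type) where
  | atom : (σ → ℝ) → ℝ → PForm σ
  | conj : PForm σ → PForm σ → PForm σ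
  | disj : PForm σ → PForm σ → PForm σ
  | always : PForm σ → PForm σ
  | event : PForm σ → PForm σ

/-- Robustness semantics of the fragment over finite traces. -/
noncomputable def rhoP {σ : Type} : PForm σ → List σ → ℝ
  | .atom f c, t => c - (match t with | [] => 0 | s :: _ => f s)
  | .conj ψ1 ψ2, t => min (rhoP ψ1 t) (rhoP ψ2 t)
  | .disj ψ1 ψ2, t => max (rhoP ψ1 t) (rhoP ψ2 t)
  | .always ψ, t => sInf {x | ∃ i < t.length, x = rhoP ψ (t.drop i)}
  | .event ψ, t => sSup {x | ∃ i < t.length, x = rhoP ψ (t.drop i)}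

/-- Boolean finite-trace semantics of the fragment. -/
def bsat {σ : Type} : PForm σ → List σ → Prop
  | .atom f c, t => match t with | [] => False | s :: _ => f s < c
  | .conj ψ1 ψ2, t => bsat ψ1 t ∧ bsat ψ2 t
  | .disj ψ1 ψ2, t => bsat ψ1 t ∨ bsat ψ2 t
  | .always ψ, t => ∀ i < t.length, bsat ψ (t.drop i)
  | .event ψ, t => ∃ i < t.length, bsat ψ (t.drop i)

/-- on nonempty finite traces, strictly positive robustness
implies Boolean satisfaction and strictly negative robustness implies
Boolean non-satisfaction, for the negation-free fragment. -/
theorem rho_characterizes_sat {σ : Type} (ψ : PForm σ) (t : List σ)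
    (ht : t ≠ []) :
    (0 < rhoP ψ t → bsat ψ t) ∧ (rhoP ψ t < 0 → ¬ bsat ψ t) := by
  induction ψ generalizing t with
  | atom f c =>
    obtain ⟨s, t', rfl⟩ := List.exists_cons_of_ne_nil ht
    constructor
    · intro h; simp [rhoP, bsat] at *; linarith
    · intro h; simp [rhoP, bsat] at *; linarith
  | conj ψ1 ψ2 ih1 ih2 =>
    constructor
    · intro h
      simp only [rhoP, lt_min_iff] at h
      exact ⟨(ih1 t ht).1 h.1, (ih2 t ht).1 h.2⟩
    · intro h hb
      simp only [rhoP, min_lt_iff] at h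
      rcases h with h | h
      · exact (ih1 t ht).2 h hb.1
      · exact (ih2 t ht).2 h hb.2
  | disj ψ1 ψ2 ih1 ih2 =>
    constructor
    · intro h
      simp only [rhoP, lt_max_iff] at h
      rcases h with h | h
      · exact Or.inl ((ih1 t ht).1 h)
      · exact Or.inr ((ih2 t ht).1 h)
    · intro h hb
      simp only [rhoP, max_lt_iff] at h
      rcases hb with hb | hb
      · exact (ih1 t ht).2 h.1 hb
      · exact (ih2 t ht).2 h.2 hb
  | always ψ ih =>
    have hfin : ({x | ∃ i < t.length, x = rhoP ψ (t.drop i)} : Set ℝ).Finite := by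
      have : {x | ∃ i < t.length, x = rhoP ψ (t.drop i)} =
          (fun i => rhoP ψ (t.drop i)) '' (Set.Iio t.length) := by
        ext x; simp [eq_comm]
      rw [this]; exact (Set.finite_Iio _).image _
    have hne : ({x | ∃ i < t.length, x = rhoP ψ (t.drop i)} : Set ℝ).Nonempty := by
      exact ⟨rhoP ψ t, 0, List.length_pos_iff.mpr ht, by simp⟩
    have hdrop : ∀ i < t.length, t.drop i ≠ [] := by
      intro i hi
      simp [List.drop_eq_nil_iff]; omega
    constructor
    · intro h i hi
      have hle : rhoP (.always ψ) t ≤ rhoP ψ (t.drop i) :=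
        csInf_le hfin.bddBelow ⟨i, hi, rfl⟩
      exact (ih _ (hdrop i hi)).1 (lt_of_lt_of_le h hle)
    · intro h hb
      obtain ⟨i, hi, hx⟩ := hne.csInf_mem hfin
      rw [show rhoP (.always ψ) t = sInf _ from rfl, hx] at h
      exact (ih _ (hdrop i hi)).2 h (hb i hi)
  | event ψ ih =>
    have hfin : ({x | ∃ i < t.length, x = rhoP ψ (t.drop i)} : Set ℝ).Finite := by
      have : {x | ∃ i < t.length, x = rhoP ψ (t.drop i)} =
          (fun i => rhoP ψ (t.drop i)) '' (Set.Iio t.length) := by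
        ext x; simp [eq_comm]
      rw [this]; exact (Set.finite_Iio _).image _
    have hne : ({x | ∃ i < t.length, x = rhoP ψ (t.drop i)} : Set ℝ).Nonempty := by
      exact ⟨rhoP ψ t, 0, List.length_pos_iff.mpr ht, by simp⟩
    have hdrop : ∀ i < t.length, t.drop i ≠ [] := by
      intro i hi
      simp [List.drop_eq_nil_iff]; omega
    constructor
    · intro h
      obtain ⟨i, hi, hx⟩ := hne.csSup_mem hfin
      rw [show rhoP (.event ψ) t = sSup _ from rfl, hx] at h
      exact ⟨i, hi, (ih _ (hdrop i hi)).1 h⟩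
    · intro h ⟨i, hi, hb⟩
      have hle : rhoP ψ (t.drop i) ≤ rhoP (.event ψ) t :=
        le_csSup hfin.bddAbove ⟨i, hi, rfl⟩
      exact (ih _ (hdrop i hi)).2 (lt_of_le_of_lt hle h) hb
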